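/- For bounded operators A, B on a Hilbert space, the spectrum of the generalized derivation δ_{A,B} : B(H) → B(H), X ↦ AX - XB, is contained in σ(A) - σ(B) = {α - β : α ∈ σ(A), β ∈ σ(B)}. In particular if σ(A) ∩ σ(B) = ∅ then δ_{A,B} is invertible, so AX - XB = Y is uniquely solvable for every Y. -/

import Mathlib

set_option maxHeartbeats 4000000
set_option linter.unusedSectionVars false

open ContinuousLinearMap


section CommKey
variable {𝔸 : Type*} [NormedRing 𝔸] [NormedAlgebra ℂ 𝔸] [CompleteSpace 𝔸]

lemma isClosed_setCentralizer (S : Set 𝔸) : IsClosed (Set.centralizer S) := by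
  have h : Set.centralizer S = ⋂ s ∈ S, {x : 𝔸 | s * x = x * s} := by
    ext x; simp [Set.mem_centralizer_iff]
  rw [h]
  exact isClosed_biInter fun s _ =>
    isClosed_eq (continuous_const.mul continuous_id) (continuous_id.mul continuous_const)

/-- If `a` and `b` commute in a complex Banach algebra, then
`σ(a - b) ⊆ σ(a) - σ(b)`. -/
lemma spectrum_sub_subset_of_commute (a b : 𝔸) (hab : Commute a b) :
    spectrum ℂ (a - b) ⊆ {z : ℂ | ∃ x ∈ spectrum ℂ a, ∃ y ∈ spectrum ℂ b, z = x - y} := by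
  set S : Set 𝔸 := {a, b} with hS
  set M : Subalgebra ℂ 𝔸 := Subalgebra.centralizer ℂ (Set.centralizer S) with hM
  have hSc : S ⊆ Set.centralizer S := by
    rintro x (rfl | rfl) <;> rintro y (rfl | rfl) <;>
      first | rfl | exact hab.symm | exact hab
  have hMmem : ∀ x : 𝔸, x ∈ M ↔ ∀ g ∈ Set.centralizer S, g * x = x * g := fun x =>
    Subalgebra.mem_centralizer_iff ℂ
  have haM : a ∈ M := (hMmem a).2 fun g hg => (hg a (by simp [hS])).symm
  have hbM : b ∈ M := (hMmem b).2 fun g hg => (hg b (by simp [hS])).symm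
  have hMsub : (M : Set 𝔸) ⊆ Set.centralizer S := by
    rw [hM, Subalgebra.coe_centralizer]
    exact Set.centralizer_subset hSc
  have hcomm : ∀ x y : ↥M, x * y = y * x := by
    rintro ⟨x, hx⟩ ⟨y, hy⟩
    ext
    exact ((hMmem x).1 hx y (hMsub hy)).symm
  -- inverse closedness
  have hunit : ∀ x : ↥M, IsUnit (x : 𝔸) → IsUnit x := by
    rintro ⟨x, hx⟩ ⟨u, hu⟩
    have hinv : (↑u⁻¹ : 𝔸) ∈ M := by
      rw [hMmem]
      intro g hg
      have hgx : g * x = x * g := (hMmem x).1 hx g hg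
      have hux : (u : 𝔸) = x := hu
      have hgu : g * (u : 𝔸) = u * g := by rw [hux]; exact hgx
      have h3 := congrArg (fun t => (↑u⁻¹ : 𝔸) * t * ↑u⁻¹) hgu
      simp only [mul_assoc, Units.inv_mul_cancel_left, Units.mul_inv_cancel_left,
        Units.mul_inv_cancel_right, Units.inv_mul_cancel_right, Units.mul_inv,
        Units.inv_mul, mul_one, one_mul] at h3
      exact h3.symm
    have hux : (u : 𝔸) = x := hu
    refine ⟨⟨⟨x, hx⟩, ⟨↑u⁻¹, hinv⟩, ?_, ?_⟩, rfl⟩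
    · ext; show x * ↑u⁻¹ = 1; rw [← hux]; exact u.mul_inv
    · ext; show ↑u⁻¹ * x = 1; rw [← hux]; exact u.inv_mul
  have hspec : ∀ x : ↥M, spectrum ℂ x ⊆ spectrum ℂ (x : 𝔸) := by
    intro x z hz
    by_contra hz'
    rw [spectrum.notMem_iff] at hz'
    rw [spectrum.mem_iff] at hz
    exact hz (hunit _ hz')
  letI : NormedCommRing ↥M := { (inferInstance : NormedRing ↥M) with mul_comm := hcomm }
  letI : CompleteSpace ↥M := by
    refine IsClosed.completeSpace_coe (hs := ?_)
    rw [hM, Subalgebra.coe_centralizer]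
    exact isClosed_setCentralizer _
  intro z hz
  have hz' : z ∈ spectrum ℂ ((⟨a, haM⟩ - ⟨b, hbM⟩ : ↥M)) :=
    spectrum.subset_subalgebra (S := Subalgebra ℂ 𝔸) (⟨a, haM⟩ - ⟨b, hbM⟩) hz
  obtain ⟨f, hf⟩ := WeakDual.CharacterSpace.mem_spectrum_iff_exists.mp hz'
  refine ⟨f ⟨a, haM⟩, hspec _ (AlgHom.apply_mem_spectrum f _),
          f ⟨b, hbM⟩, hspec _ (AlgHom.apply_mem_spectrum f _), ?_⟩
  rw [← hf, map_sub]

end CommKey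


variable {H : Type*} [NormedAddCommGroup H] [InnerProductSpace ℂ H] [CompleteSpace H]

/-- The generalized derivation `δ_{A,B} : B(H) → B(H)`, `X ↦ AX - XB`. -/
noncomputable def genDerivation (A B : H →L[ℂ] H) :
    (H →L[ℂ] H) →L[ℂ] (H →L[ℂ] H) :=
  ContinuousLinearMap.mul ℂ (H →L[ℂ] H) A -
    (ContinuousLinearMap.mul ℂ (H →L[ℂ] H)).flip B

lemma mulLeft_spectrum_subset (A : H →L[ℂ] H) :
    spectrum ℂ (ContinuousLinearMap.mul ℂ (H →L[ℂ] H) A) ⊆ spectrum ℂ A := by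
  intro z hz
  by_contra hz'
  rw [spectrum.notMem_iff] at hz'
  rw [spectrum.mem_iff] at hz
  obtain ⟨u, hu⟩ := hz'
  refine hz ⟨⟨ContinuousLinearMap.mul ℂ (H →L[ℂ] H) ↑u, ContinuousLinearMap.mul ℂ (H →L[ℂ] H) ↑u⁻¹, ?_, ?_⟩, ?_⟩
  · ext X
    simp [ContinuousLinearMap.mul_apply, mul_apply', ← mul_assoc, u.mul_inv]
  · ext X
    simp [ContinuousLinearMap.mul_apply, mul_apply', ← mul_assoc, u.inv_mul]
  · show ContinuousLinearMap.mul ℂ (H →L[ℂ] H) ↑u = _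
    rw [hu]
    ext X
    simp [mul_apply', sub_mul, Algebra.algebraMap_eq_smul_one, smul_mul_assoc]

lemma mulRight_spectrum_subset (B : H →L[ℂ] H) :
    spectrum ℂ ((ContinuousLinearMap.mul ℂ (H →L[ℂ] H)).flip B) ⊆ spectrum ℂ B := by
  intro z hz
  by_contra hz'
  rw [spectrum.notMem_iff] at hz'
  rw [spectrum.mem_iff] at hz
  obtain ⟨u, hu⟩ := hz'
  refine hz ⟨⟨(ContinuousLinearMap.mul ℂ (H →L[ℂ] H)).flip ↑u, (ContinuousLinearMap.mul ℂ (H →L[ℂ] H)).flip ↑u⁻¹, ?_, ?_⟩, ?_⟩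
  · ext X
    simp [ContinuousLinearMap.mul_apply, flip_apply, mul_apply', mul_assoc, u.inv_mul]
  · ext X
    simp [ContinuousLinearMap.mul_apply, flip_apply, mul_apply', mul_assoc, u.mul_inv]
  · show (ContinuousLinearMap.mul ℂ (H →L[ℂ] H)).flip ↑u = _
    rw [hu]
    ext X
    simp [flip_apply, mul_apply', mul_sub, Algebra.algebraMap_eq_smul_one, mul_smul_comm]

lemma mulLR_commute (A B : H →L[ℂ] H) :
    Commute (ContinuousLinearMap.mul ℂ (H →L[ℂ] H) A)
      ((ContinuousLinearMap.mul ℂ (H →L[ℂ] H)).flip B) := by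
  ext X
  simp [ContinuousLinearMap.mul_apply, flip_apply, mul_apply', mul_assoc]

lemma genDerivation_apply (A B X : H →L[ℂ] H) :
    genDerivation A B X = A * X - X * B := by
  simp [genDerivation, sub_apply, mul_apply', flip_apply]

theorem stmt16' (A B : H →L[ℂ] H)
    (key : spectrum ℂ (genDerivation A B) ⊆
      {z : ℂ | ∃ a ∈ spectrum ℂ (ContinuousLinearMap.mul ℂ (H →L[ℂ] H) A),
        ∃ b ∈ spectrum ℂ ((ContinuousLinearMap.mul ℂ (H →L[ℂ] H)).flip B), z = a - b}) :
    spectrum ℂ (genDerivation A B) ⊆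
      {z : ℂ | ∃ a ∈ spectrum ℂ A, ∃ b ∈ spectrum ℂ B, z = a - b} ∧
    (spectrum ℂ A ∩ spectrum ℂ B = ∅ →
      ∀ Y : H →L[ℂ] H, ∃! X : H →L[ℂ] H, A * X - X * B = Y) := by
  have part1 : spectrum ℂ (genDerivation A B) ⊆
      {z : ℂ | ∃ a ∈ spectrum ℂ A, ∃ b ∈ spectrum ℂ B, z = a - b} := by
    intro z hz
    obtain ⟨x, hx, y, hy, rfl⟩ := key hz
    exact ⟨x, mulLeft_spectrum_subset A hx, y, mulRight_spectrum_subset B hy, rfl⟩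
  refine ⟨part1, fun hdisj Y => ?_⟩
  have h0 : (0 : ℂ) ∉ spectrum ℂ (genDerivation A B) := by
    intro h0
    obtain ⟨x, hx, y, hy, hxy⟩ := part1 h0
    have hxy' : x = y := by rw [eq_comm, sub_eq_zero] at hxy; exact hxy
    rw [hxy'] at hx
    have : y ∈ spectrum ℂ A ∩ spectrum ℂ B := ⟨hx, hy⟩
    rw [hdisj] at this
    exact this
  rw [spectrum.notMem_iff, map_zero, zero_sub] at h0
  obtain ⟨u, hu⟩ := h0.neg
  rw [neg_neg] at hu
  refine ⟨(↑u⁻¹ : (H →L[ℂ] H) →L[ℂ] (H →L[ℂ] H)) Y, ?_, ?_⟩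
  · show A * ((↑u⁻¹ : (H →L[ℂ] H) →L[ℂ] (H →L[ℂ] H)) Y) -
        ((↑u⁻¹ : (H →L[ℂ] H) →L[ℂ] (H →L[ℂ] H)) Y) * B = Y
    rw [← genDerivation_apply, ← hu]
    have := DFunLike.congr_fun u.mul_inv Y
    simp only [ContinuousLinearMap.mul_apply, one_apply] at this
    exact this
  · intro X hX
    rw [← genDerivation_apply, ← hu] at hX
    have := DFunLike.congr_fun u.inv_mul X
    simp only [ContinuousLinearMap.mul_apply, ContinuousLinearMap.one_apply] at this
    rw [← this, hX]


theorem stmt16 (A B : H →L[ℂ] H) :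
    spectrum ℂ (genDerivation A B) ⊆
      {z : ℂ | ∃ a ∈ spectrum ℂ A, ∃ b ∈ spectrum ℂ B, z = a - b} ∧
    (spectrum ℂ A ∩ spectrum ℂ B = ∅ →
      ∀ Y : H →L[ℂ] H, ∃! X : H →L[ℂ] H, A * X - X * B = Y) := by
  refine stmt16' A B ?_
  have key := spectrum_sub_subset_of_commute _ _ (mulLR_commute A B)
  rw [genDerivation]
  exact key
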